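/- Let (p_i)_{i≥1} be a sequence of prime numbers and let Σ_P be the P-adic solenoid. Then the set of elements of finite order in Σ_P has empty interior; equivalently, the elements of infinite order are dense in Σ_P. -/

import Mathlib

/-- The `P`-adic solenoid associated to a sequence `p : ℕ → ℕ`: the subgroup
`{x ∈ ∏_{i} 𝕋 : x i = (x (i+1)) ^ (p i) for all i}` of the product group `ℕ → Circle`.
(As a topological space it carries the subspace topology from the product topology; this is
the inverse limit of the system `(𝕋, z ↦ z ^ (p i))`.) -/
noncomputable def solenoid (p : ℕ → ℕ) : Subgroup (ℕ → Circle) where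
  carrier := {x | ∀ i, x i = x (i + 1) ^ p i}
  one_mem' := by intro i; simp
  mul_mem' := by
    intro x y hx hy i
    simp only [Pi.mul_apply, mul_pow]
    rw [← hx i, ← hy i]
  inv_mem' := by
    intro x hx i
    simp only [Pi.inv_apply, inv_pow]
    rw [← hx i]

private lemma exp_pow' (t : ℝ) (n : ℕ) : Circle.exp t ^ n = Circle.exp (n * t) := by
  induction n with
  | zero => simp
  | succ k ih =>
    rw [pow_succ, ih, ← Circle.exp_add]
    congr 1
    push_cast
    ring

/-- The set of parameters `t` for which `Circle.exp t` is torsion is countable. -/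
private lemma countable_finOrder : {t : ℝ | IsOfFinOrder (Circle.exp t)}.Countable := by
  have hsub : {t : ℝ | IsOfFinOrder (Circle.exp t)} ⊆
      Set.range (fun q : ℚ => (q : ℝ) * (2 * Real.pi)) := by
    intro t ht
    obtain ⟨n, hn, h1⟩ := (isOfFinOrder_iff_pow_eq_one).mp ht
    rw [exp_pow', Circle.exp_eq_one] at h1
    obtain ⟨m, hm⟩ := h1
    refine ⟨(m : ℚ) / n, ?_⟩
    have hn' : (n : ℝ) ≠ 0 := Nat.cast_ne_zero.mpr hn.ne'
    push_cast
    field_simp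
    linarith [hm]
  exact (Set.countable_range _).mono hsub

/-- The product of the first `i` values of `p`, as a real number. -/
private noncomputable def solP (p : ℕ → ℕ) (i : ℕ) : ℝ := ∏ j ∈ Finset.range i, (p j : ℝ)

private lemma solPath_mem (p : ℕ → ℕ) (hp : ∀ i, (p i).Prime) (t : ℝ) :
    (fun i => Circle.exp (t / solP p i)) ∈ solenoid p := by
  intro i
  show Circle.exp (t / solP p i) = Circle.exp (t / solP p (i + 1)) ^ p i
  rw [exp_pow']
  refine congrArg Circle.exp ?_
  have h1 : solP p (i + 1) = solP p i * p i := Finset.prod_range_succ _ _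
  have h2 : (p i : ℝ) ≠ 0 := by exact_mod_cast (hp i).pos.ne'
  rw [h1, ← div_div, mul_comm, div_mul_cancel₀ _ h2]

/-- The one-parameter subgroup of the solenoid: `t ↦ (exp (t / (p₀⋯p_{i-1})))_i`. -/
private noncomputable def solPath (p : ℕ → ℕ) (hp : ∀ i, (p i).Prime) (t : ℝ) : solenoid p :=
  ⟨fun i => Circle.exp (t / solP p i), solPath_mem p hp t⟩

private lemma solPath_zero (p : ℕ → ℕ) (hp : ∀ i, (p i).Prime) : solPath p hp 0 = 1 := by
  refine Subtype.ext (funext fun i => ?_)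
  show Circle.exp (0 / solP p i) = 1
  rw [zero_div, Circle.exp_zero]

private lemma continuous_solPath (p : ℕ → ℕ) (hp : ∀ i, (p i).Prime) :
    Continuous (solPath p hp) := by
  apply Continuous.subtype_mk
  apply continuous_pi
  intro i
  exact Circle.exp.continuous.comp (continuous_id.div_const _)

/-- For any sequence of primes `p`, the set of elements of finite order in the
`P`-adic solenoid has empty interior; equivalently, the elements of infinite order are dense. -/
theorem stmt6 (p : ℕ → ℕ) (hp : ∀ i, (p i).Prime) :
    interior {x : solenoid p | IsOfFinOrder x} = ∅ ∧
      Dense {x : solenoid p | ¬ IsOfFinOrder x} := by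
  have hcompl : {x : solenoid p | ¬ IsOfFinOrder x} = {x : solenoid p | IsOfFinOrder x}ᶜ := rfl
  have hd : Dense {x : solenoid p | ¬ IsOfFinOrder x} := by
    intro x
    rw [mem_closure_iff_nhds]
    intro U hU
    -- the continuous map `t ↦ x * solPath t`, equal to `x` at `t = 0`
    set f : ℝ → solenoid p := fun t => x * solPath p hp t with hf
    have hfc : Continuous f := continuous_const.mul (continuous_solPath p hp)
    have hf0 : f 0 = x := by rw [hf]; simp [solPath_zero]
    have hUf : f ⁻¹' U ∈ nhds (0 : ℝ) := by
      apply hfc.continuousAt.preimage_mem_nhds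
      rw [hf0]; exact hU
    -- the bad set of parameters, i.e. those making the zeroth coordinate torsion
    set B : Set ℝ := {t | IsOfFinOrder ((x : ℕ → Circle) 0 * Circle.exp t)} with hB
    have hBc : B.Countable := by
      rcases Set.eq_empty_or_nonempty B with h | h
      · simp [h]
      · obtain ⟨t0, ht0⟩ := h
        have hsub : B ⊆ (fun s => t0 + s) '' {t : ℝ | IsOfFinOrder (Circle.exp t)} := by
          intro t ht
          refine ⟨t - t0, ?_, by ring⟩
          have he : Circle.exp (t - t0)
              = ((x : ℕ → Circle) 0 * Circle.exp t) * ((x : ℕ → Circle) 0 * Circle.exp t0)⁻¹ := by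
            rw [Circle.exp_sub, mul_inv, div_eq_mul_inv]
            have hc : ∀ a b c : Circle, a * b * (a⁻¹ * c) = b * c := by
              intro a b c
              rw [mul_comm a b, mul_assoc, ← mul_assoc a a⁻¹ c, mul_inv_cancel, one_mul]
            exact (hc _ _ _).symm
          rw [Set.mem_setOf_eq, he]
          exact ht.mul ht0.inv
        exact (countable_finOrder.image _).mono hsub
    have hdense : Dense Bᶜ := hBc.dense_compl ℝ
    obtain ⟨t, htInt, htB⟩ := hdense.inter_open_nonempty (interior (f ⁻¹' U)) isOpen_interior
      ⟨0, mem_interior_iff_mem_nhds.mpr hUf⟩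
    refine ⟨f t, Set.mem_preimage.mp (interior_subset htInt), ?_⟩
    intro hfin
    apply htB
    have hcoe : IsOfFinOrder (((f t : solenoid p) : ℕ → Circle) 0) :=
      (Pi.evalMonoidHom (fun _ => Circle) 0).isOfFinOrder ((solenoid p).subtype.isOfFinOrder hfin)
    have hcoord : ((f t : solenoid p) : ℕ → Circle) 0 = (x : ℕ → Circle) 0 * Circle.exp t := by
      show ((x : ℕ → Circle) * _) 0 = _
      have : solP p 0 = 1 := Finset.prod_range_zero _
      simp only [Pi.mul_apply]
      congr 1
      show Circle.exp (t / solP p 0) = Circle.exp t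
      rw [this, div_one]
    rwa [hcoord] at hcoe
  refine ⟨?_, hd⟩
  rw [interior_eq_empty_iff_dense_compl]
  rwa [hcompl] at hd
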